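/- Single-layer S6 models are not universal approximators (Theorem 3.1, part 2): Fix any constant Δ > 0 and force all sampling intervals of the S6 unit to equal Δ (i.e. Δ_k^{(i)} = Δ for all i and k, so Ā_k^{(i)} = exp(ΔA) is input-independent while B̄_k^{(i)} and C̄_k remain input-dependent). Let σ: ℝ → ℝ be any function and let L ≥ 3. Then there exist a continuous function G: [0,1]^{L−1} × {1} → ℝ and some ε > 0 such that for every d ≥ 1, every n ≥ 1, and every choice of parameters M, N, θ ∈ ℝ^d, invertible A ∈ ℝ^{n×n}, B ∈ ℝ^{n×d}, C ∈ ℝ^{d×n}, the single-layer model G̃ with recurrent unit Γ_S6 satisfies |G̃(u) − G(u)| > ε for some u ∈ [0,1]^{L−1} × {1}. -/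

import Mathlib

open Matrix Filter Asymptotics MeasureTheory Real Topology

noncomputable section

/-- Matrix exponential over the reals. -/
def mexp {n : ℕ} (A : Matrix (Fin n) (Fin n) ℝ) : Matrix (Fin n) (Fin n) ℝ :=
  NormedSpace.exp A

/-- The softplus function `z ↦ log (1 + e^z)`. -/
def softplus (z : ℝ) : ℝ := Real.log (1 + Real.exp z)

/-- Time-varying linear state recursion: `x 0 = 0`,
`x (k+1) = Abar k *ᵥ x k + u k • Bbar k`.  (Index `k : ℕ` is the 0-based
position of the input, so `x (k+1)` is the state `x_{k+1}` after seeing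
inputs `u_1 = u 0, …, u_{k+1} = u k`.) -/
def tvState {n : ℕ} (Abar : ℕ → Matrix (Fin n) (Fin n) ℝ) (Bbar : ℕ → Fin n → ℝ)
    (u : ℕ → ℝ) : ℕ → Fin n → ℝ
  | 0 => 0
  | k + 1 => (Abar k) *ᵥ (tvState Abar Bbar u k) + u k • Bbar k

/-- Zero-padded extension of a finite scalar sequence `(u_1, …, u_L)`
(`u 0` is `u_1`, …, `u ⟨L-1⟩` is `u_L`). -/
def seq {L : ℕ} (u : Fin L → ℝ) : ℕ → ℝ := fun k => if h : k < L then u ⟨k, h⟩ else 0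

/-- Zero-padded extension of a finite vector-valued sequence. -/
def seqd {L d : ℕ} (u : Fin L → Fin d → ℝ) : ℕ → Fin d → ℝ :=
  fun k => if h : k < L then u ⟨k, h⟩ else 0

/-- The final (`L`-th) output of an S6 unit in which every sampling interval is
forced to equal the constant `Δ` (so `Ā = exp(Δ A)` is input-independent, while
`B̄_k = A⁻¹(Ā − I) B u_k` and `C̄_k = u_kᵀ C` remain input-dependent):
`y_L^{(i)} = C̄_L x_L^{(i)}` with `x_k^{(i)} = Ā x_{k-1}^{(i)} + B̄_k u_k^{(i)}`, `x_0 = 0`. -/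
def s6FinalFixed {n d : ℕ} (A : Matrix (Fin n) (Fin n) ℝ) (Δ : ℝ)
    (B : Matrix (Fin n) (Fin d) ℝ) (C : Matrix (Fin d) (Fin n) ℝ)
    (L : ℕ) (u : ℕ → Fin d → ℝ) (i : Fin d) : ℝ :=
  (u (L - 1) ᵥ* C) ⬝ᵥ
    tvState (fun _ => mexp (Δ • A))
      (fun k => A⁻¹ *ᵥ ((mexp (Δ • A) - 1) *ᵥ (B *ᵥ u k)))
      (fun k => u k i) L

/-- The domain `[0,1]^{L-1} × {1}`: scalar sequences `(u_1, …, u_L)` with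
`u_j ∈ [0,1]` for `j < L` and `u_L = 1` (0-based indexing). -/
def cubeOne (L : ℕ) : Set (Fin L → ℝ) :=
  {u | (∀ k : Fin L, (k : ℕ) < L - 1 → u k ∈ Set.Icc (0 : ℝ) 1) ∧
       (∀ k : Fin L, (k : ℕ) = L - 1 → u k = 1)}

/- ----------------------------------------------------------------- -/
/- Auxiliary lemmas for the proof                                     -/
/- ----------------------------------------------------------------- -/

lemma mulVec_sum' {n : ℕ} (A : Matrix (Fin n) (Fin n) ℝ) (s : Finset ℕ) (f : ℕ → Fin n → ℝ) :
    A *ᵥ (∑ k ∈ s, f k) = ∑ k ∈ s, A *ᵥ f k :=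
  map_sum (Matrix.mulVecLin A) f s

lemma dotProduct_sum' {n : ℕ} (v : Fin n → ℝ) (s : Finset ℕ) (f : ℕ → Fin n → ℝ) :
    v ⬝ᵥ (∑ k ∈ s, f k) = ∑ k ∈ s, v ⬝ᵥ f k := by
  simp [dotProduct, Finset.mul_sum]
  exact Finset.sum_comm

lemma tvState_closed {n : ℕ} (Ab : Matrix (Fin n) (Fin n) ℝ) (w : Fin n → ℝ)
    (c : ℕ → ℝ) (m : ℝ) (K : ℕ) :
    tvState (fun _ => Ab) (fun k => c k • w) (fun k => c k * m) K
      = ∑ k ∈ Finset.range K, (m * (c k)^2) • ((Ab ^ (K - 1 - k)) *ᵥ w) := by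
  induction K with
  | zero => simp [tvState]
  | succ K ih =>
    show Ab *ᵥ _ + (c K * m) • (c K • w) = _
    rw [ih, Finset.sum_range_succ, mulVec_sum']
    have h1 : ∀ k ∈ Finset.range K,
        Ab *ᵥ ((m * c k ^ 2) • (Ab ^ (K - 1 - k) *ᵥ w))
          = (m * c k ^ 2) • (Ab ^ (K + 1 - 1 - k) *ᵥ w) := by
      intro k hk
      rw [Matrix.mulVec_smul]
      congr 1
      rw [Matrix.mulVec_mulVec, ← pow_succ']
      have hk' := Finset.mem_range.mp hk
      have he : K - 1 - k + 1 = K + 1 - 1 - k := by omega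
      rw [he]
    rw [Finset.sum_congr rfl h1]
    congr 1
    rw [smul_smul]
    have : K + 1 - 1 - K = 0 := by omega
    rw [this, pow_zero, Matrix.one_mulVec]
    congr 1
    ring

lemma s6_reduced {n d : ℕ} (A : Matrix (Fin n) (Fin n) ℝ) (Δ : ℝ)
    (B : Matrix (Fin n) (Fin d) ℝ) (C : Matrix (Fin d) (Fin n) ℝ)
    (M : Fin d → ℝ) (L : ℕ) (v : ℕ → ℝ) (i : Fin d) :
    s6FinalFixed A Δ B C L (fun k => v k • M) i
      = v (L-1) * (M i * ∑ k ∈ Finset.range L, (v k)^2 *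
          ((M ᵥ* C) ⬝ᵥ ((mexp (Δ • A)) ^ (L - 1 - k) *ᵥ
            (A⁻¹ *ᵥ ((mexp (Δ • A) - 1) *ᵥ (B *ᵥ M)))))) := by
  unfold s6FinalFixed
  have hB : (fun k => A⁻¹ *ᵥ ((mexp (Δ • A) - 1) *ᵥ (B *ᵥ (v k • M))))
      = fun k => v k • (A⁻¹ *ᵥ ((mexp (Δ • A) - 1) *ᵥ (B *ᵥ M))) := by
    funext k
    rw [Matrix.mulVec_smul, Matrix.mulVec_smul, Matrix.mulVec_smul]
  have hu : (fun k => (v k • M) i) = fun k => v k * M i := rfl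
  rw [hB, hu, tvState_closed, Matrix.smul_vecMul, smul_dotProduct, dotProduct_sum',
    smul_eq_mul]
  congr 1
  rw [Finset.mul_sum]
  refine Finset.sum_congr rfl fun k _ => ?_
  rw [dotProduct_smul, smul_eq_mul]
  ring

lemma pair_mixed (a b : ℝ) (ha : 0 ≤ a) (hb : b ≤ 0) :
    ∃ x y x' y' : ℝ, x ∈ Set.Icc (0:ℝ) 1 ∧ y ∈ Set.Icc (0:ℝ) 1 ∧ x' ∈ Set.Icc (0:ℝ) 1 ∧
      y' ∈ Set.Icc (0:ℝ) 1 ∧ a*x^2 + b*y^2 = a*x'^2 + b*y'^2 ∧ 1/2 ≤ |x*y - x'*y'| := by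
  rcases le_or_gt 0 (a + b) with hab | hab
  · rcases eq_or_lt_of_le ha with ha0 | ha0
    · have hb0 : b = 0 := by linarith
      exact ⟨1, 1, 0, 0, by norm_num, by norm_num, by norm_num, by norm_num,
        by rw [← ha0, hb0]; ring, by norm_num⟩
    · refine ⟨1, 1, Real.sqrt ((a+b)/a), 0, by norm_num, by norm_num,
        ⟨Real.sqrt_nonneg _, Real.sqrt_le_one.mpr (by rw [div_le_one ha0]; linarith)⟩,
        by norm_num, ?_, by norm_num⟩
      rw [Real.sq_sqrt (by positivity)]
      field_simp
      ring
  · have hb0 : b < 0 := by linarith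
    refine ⟨1, 1, 0, Real.sqrt ((a+b)/b), by norm_num, by norm_num, by norm_num,
      ⟨Real.sqrt_nonneg _, Real.sqrt_le_one.mpr
        (div_le_one_iff.mpr (Or.inr (Or.inr ⟨hb0, by linarith⟩)))⟩, ?_, by norm_num⟩
    rw [Real.sq_sqrt (div_nonneg_iff.mpr (Or.inr ⟨by linarith, hb⟩)),
      mul_div_cancel₀ _ hb0.ne]
    ring

lemma pair_same (a b : ℝ) (hab : a + b ≠ 0) (h1 : (1:ℝ)/2 ≤ a/(a+b)) (h2 : a/(a+b) ≤ 1) :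
    ∃ x y x' y' : ℝ, x ∈ Set.Icc (0:ℝ) 1 ∧ y ∈ Set.Icc (0:ℝ) 1 ∧ x' ∈ Set.Icc (0:ℝ) 1 ∧
      y' ∈ Set.Icc (0:ℝ) 1 ∧ a*x^2 + b*y^2 = a*x'^2 + b*y'^2 ∧ 1/2 ≤ |x*y - x'*y'| := by
  have hpos : 0 ≤ a/(a+b) := le_trans (by norm_num) h1
  set t := Real.sqrt (a/(a+b)) with ht
  have ht2 : t^2 = a/(a+b) := Real.sq_sqrt hpos
  have htmem : t ∈ Set.Icc (0:ℝ) 1 := ⟨Real.sqrt_nonneg _, Real.sqrt_le_one.mpr h2⟩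
  refine ⟨t, t, 1, 0, htmem, htmem, by norm_num, by norm_num, ?_, ?_⟩
  · have : a*t^2 + b*t^2 = (a+b) * (a/(a+b)) := by rw [ht2]; ring
    rw [this, mul_div_cancel₀ _ hab]; ring
  · have : t * t = a/(a+b) := by rw [← ht2]; ring
    rw [this, abs_of_nonneg (by linarith)]
    linarith

lemma exists_pair (a b : ℝ) :
    ∃ x y x' y' : ℝ, x ∈ Set.Icc (0:ℝ) 1 ∧ y ∈ Set.Icc (0:ℝ) 1 ∧ x' ∈ Set.Icc (0:ℝ) 1 ∧
      y' ∈ Set.Icc (0:ℝ) 1 ∧ a*x^2 + b*y^2 = a*x'^2 + b*y'^2 ∧ 1/2 ≤ |x*y - x'*y'| := by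
  have swap : (∃ x y x' y' : ℝ, x ∈ Set.Icc (0:ℝ) 1 ∧ y ∈ Set.Icc (0:ℝ) 1 ∧
      x' ∈ Set.Icc (0:ℝ) 1 ∧ y' ∈ Set.Icc (0:ℝ) 1 ∧
      b*x^2 + a*y^2 = b*x'^2 + a*y'^2 ∧ 1/2 ≤ |x*y - x'*y'|) →
      (∃ x y x' y' : ℝ, x ∈ Set.Icc (0:ℝ) 1 ∧ y ∈ Set.Icc (0:ℝ) 1 ∧
      x' ∈ Set.Icc (0:ℝ) 1 ∧ y' ∈ Set.Icc (0:ℝ) 1 ∧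
      a*x^2 + b*y^2 = a*x'^2 + b*y'^2 ∧ 1/2 ≤ |x*y - x'*y'|) := by
    rintro ⟨x, y, x', y', hx, hy, hx', hy', he, hd⟩
    exact ⟨y, x, y', x', hy, hx, hy', hx', by linarith,
      by rw [mul_comm y x, mul_comm y' x']; exact hd⟩
  rcases le_or_gt 0 a with ha | ha <;> rcases le_or_gt 0 b with hb | hb
  · rcases eq_or_lt_of_le ha with ha0 | ha0
    · exact swap (pair_mixed b a hb (by linarith))
    rcases eq_or_lt_of_le hb with hb0 | hb0
    · exact pair_mixed a b ha (by linarith)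
    rcases le_total b a with hba | hba
    · have hab : 0 < a + b := by linarith
      exact pair_same a b hab.ne' (by rw [le_div_iff₀ hab]; linarith)
        (by rw [div_le_one hab]; linarith)
    · have hab : 0 < b + a := by linarith
      exact swap (pair_same b a hab.ne' (by rw [le_div_iff₀ hab]; linarith)
        (by rw [div_le_one hab]; linarith))
  · exact pair_mixed a b ha hb.le
  · exact swap (pair_mixed b a hb ha.le)
  · rcases le_total a b with hba | hba
    · have hab : a + b < 0 := by linarith
      exact pair_same a b hab.ne (by rw [le_div_iff_of_neg hab]; linarith)
        (by rw [div_le_one_of_neg hab]; linarith)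
    · have hab : b + a < 0 := by linarith
      exact swap (pair_same b a hab.ne (by rw [le_div_iff_of_neg hab]; linarith)
        (by rw [div_le_one_of_neg hab]; linarith))

/-- The probe input `(x, y, 0, …, 0, 1)`. -/
def mkInput (L : ℕ) (x y : ℝ) : Fin L → ℝ :=
  fun k => if (k:ℕ) = 0 then x else if (k:ℕ) = 1 then y else if (k:ℕ) = L - 1 then 1 else 0

lemma mkInput_mem (L : ℕ) (hL : 3 ≤ L) {x y : ℝ}
    (hx : x ∈ Set.Icc (0:ℝ) 1) (hy : y ∈ Set.Icc (0:ℝ) 1) :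
    mkInput L x y ∈ cubeOne L := by
  constructor
  · intro k hk
    simp only [mkInput]
    split_ifs with h0 h1 h2
    · exact hx
    · exact hy
    · exact absurd h2 (by omega)
    · exact ⟨le_refl 0, zero_le_one⟩
  · intro k hk
    simp only [mkInput]
    rw [if_neg (by omega), if_neg (by omega), if_pos hk]

lemma seq_mkInput (L : ℕ) (x y : ℝ) (k : ℕ) (hk : k < L) :
    seq (mkInput L x y) k
      = if k = 0 then x else if k = 1 then y else if k = L - 1 then 1 else 0 := by
  simp only [_root_.seq]
  rw [dif_pos hk]
  rfl

lemma sum_mkInput (L : ℕ) (hL : 3 ≤ L) (x y : ℝ) (γ : ℕ → ℝ) :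
    ∑ k ∈ Finset.range L, (seq (mkInput L x y) k)^2 * γ k
      = x^2 * γ 0 + (y^2 * γ 1 + γ (L-1)) := by
  have h : ∀ k ∈ Finset.range L, (seq (mkInput L x y) k)^2 * γ k
      = (if k = 0 then x^2 * γ 0 else 0) + ((if k = 1 then y^2 * γ 1 else 0)
          + (if k = L-1 then γ (L-1) else 0)) := by
    intro k hk
    have hkL := Finset.mem_range.mp hk
    rw [seq_mkInput L x y k hkL]
    by_cases h0 : k = 0
    · subst h0
      rw [if_pos rfl, if_pos rfl, if_neg (by omega), if_neg (by omega)]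
      ring
    by_cases h1 : k = 1
    · subst h1
      rw [if_neg h0, if_pos rfl, if_neg h0, if_pos rfl, if_neg (by omega)]
      ring
    by_cases h2 : k = L - 1
    · subst h2
      rw [if_neg h0, if_neg h1, if_pos rfl, if_neg h0, if_neg h1, if_pos rfl]
      ring
    · rw [if_neg h0, if_neg h1, if_neg h2, if_neg h0, if_neg h1, if_neg h2]
      ring
  rw [Finset.sum_congr rfl h, Finset.sum_add_distrib, Finset.sum_add_distrib,
    Finset.sum_ite_eq' (Finset.range L) 0 (fun _ => x^2 * γ 0),
    Finset.sum_ite_eq' (Finset.range L) 1 (fun _ => y^2 * γ 1),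
    Finset.sum_ite_eq' (Finset.range L) (L-1) (fun _ => γ (L-1)),
    if_pos (Finset.mem_range.mpr (by omega)),
    if_pos (Finset.mem_range.mpr (by omega)),
    if_pos (Finset.mem_range.mpr (by omega))]


/-- **Single-layer S6 (Mamba) models are not universal approximators**
(Theorem 3.1, part 2).  Fix any constant `Δ > 0` and force all sampling
intervals of the S6 unit to equal `Δ`.  Let `σ` be any activation and `L ≥ 3`.
Then there are a continuous `G : [0,1]^{L-1} × {1} → ℝ` and an `ε > 0` such that
for every width `d ≥ 1`, state dimension `n ≥ 1`, and all parameters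
`M, N, θ, A` (invertible), `B`, `C`, the single-layer S6 model is more than
`ε` away from `G` at some point of `[0,1]^{L-1} × {1}`. -/
theorem s6_single_layer_not_universal
    (L : ℕ) (hL : 3 ≤ L) (Δ : ℝ) (hΔ : 0 < Δ) (σ : ℝ → ℝ) :
    ∃ (G : (Fin L → ℝ) → ℝ), ContinuousOn G (cubeOne L) ∧
      ∃ ε : ℝ, 0 < ε ∧
        ∀ (d n : ℕ), 1 ≤ d → 1 ≤ n →
          ∀ (M N θ : Fin d → ℝ) (A : Matrix (Fin n) (Fin n) ℝ), IsUnit A.det →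
            ∀ (B : Matrix (Fin n) (Fin d) ℝ) (C : Matrix (Fin d) (Fin n) ℝ),
              ∃ u ∈ cubeOne L,
                |(∑ i, N i * σ (s6FinalFixed A Δ B C L (fun k => seq u k • M) i + θ i))
                    - G u| > ε := by
  have h0L : 0 < L := by omega
  have h1L : 1 < L := by omega
  refine ⟨fun u => u ⟨0, h0L⟩ * u ⟨1, h1L⟩,
    ((continuous_apply (⟨0, h0L⟩ : Fin L)).mul
      (continuous_apply (⟨1, h1L⟩ : Fin L))).continuousOn, 1/5, by norm_num, ?_⟩
  intro d n hd hn M N θ A hA B C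
  set γ : ℕ → ℝ := fun k => (M ᵥ* C) ⬝ᵥ ((mexp (Δ • A)) ^ (L - 1 - k) *ᵥ
      (A⁻¹ *ᵥ ((mexp (Δ • A) - 1) *ᵥ (B *ᵥ M)))) with hγ
  obtain ⟨x, y, x', y', hx, hy, hx', hy', heq, hdiff⟩ := exists_pair (γ 0) (γ 1)
  have hval : ∀ z t : ℝ,
      (∑ i, N i * σ (s6FinalFixed A Δ B C L (fun k => seq (mkInput L z t) k • M) i + θ i))
        = ∑ i, N i * σ (M i * (z^2 * γ 0 + (t^2 * γ 1 + γ (L-1))) + θ i) := by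
    intro z t
    refine Finset.sum_congr rfl fun i _ => ?_
    rw [s6_reduced A Δ B C M L (seq (mkInput L z t)) i, hγ]
    rw [sum_mkInput L hL z t]
    have h1 : seq (mkInput L z t) (L - 1) = 1 := by
      rw [seq_mkInput L z t (L-1) (by omega), if_neg (by omega), if_neg (by omega),
        if_pos rfl]
    rw [h1, one_mul]
  have hkey : x^2 * γ 0 + (y^2 * γ 1 + γ (L-1)) = x'^2 * γ 0 + (y'^2 * γ 1 + γ (L-1)) := by
    linarith [heq]
  have hFeq : (∑ i, N i * σ (s6FinalFixed A Δ B C L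
        (fun k => seq (mkInput L x y) k • M) i + θ i))
      = (∑ i, N i * σ (s6FinalFixed A Δ B C L
        (fun k => seq (mkInput L x' y') k • M) i + θ i)) := by
    rw [hval x y, hval x' y', hkey]
  have hG : ∀ z t : ℝ, (mkInput L z t) ⟨0, h0L⟩ * (mkInput L z t) ⟨1, h1L⟩ = z * t := by
    intro z t
    simp [mkInput]
  rcases le_or_gt (|(∑ i, N i * σ (s6FinalFixed A Δ B C L
      (fun k => seq (mkInput L x y) k • M) i + θ i)) - x * y|) (1/5) with hle | hgt
  · refine ⟨mkInput L x' y', mkInput_mem L hL hx' hy', ?_⟩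
    show 1/5 < |(∑ i, N i * σ (s6FinalFixed A Δ B C L
        (fun k => seq (mkInput L x' y') k • M) i + θ i))
      - ((mkInput L x' y') ⟨0, h0L⟩ * (mkInput L x' y') ⟨1, h1L⟩)|
    rw [hG, ← hFeq]
    set F := (∑ i, N i * σ (s6FinalFixed A Δ B C L
        (fun k => seq (mkInput L x y) k • M) i + θ i)) with hF
    have htri : |x*y - x'*y'| ≤ |x*y - F| + |F - x'*y'| := abs_sub_le _ _ _
    rw [abs_sub_comm (x*y) F] at htri
    linarith
  · refine ⟨mkInput L x y, mkInput_mem L hL hx hy, ?_⟩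
    show 1/5 < |(∑ i, N i * σ (s6FinalFixed A Δ B C L
        (fun k => seq (mkInput L x y) k • M) i + θ i))
      - ((mkInput L x y) ⟨0, h0L⟩ * (mkInput L x y) ⟨1, h1L⟩)|
    rw [hG]
    exact hgt
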